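/- Let m : ℝ → ℝ be continuous, bounded and Lebesgue integrable, and suppose there exists x₀ ∈ ℝ such that m(x) ≤ 0 for all x ≤ x₀ and m(x) ≥ 0 for all x ≥ x₀. Define u(x) = (1/2)∫_ℝ e^{−|x−ξ|} m(ξ) dξ. Then u'(x) ≥ −sup_{y∈ℝ} |u(y)| for every x ∈ ℝ. -/

import Mathlib

open MeasureTheory Set

private lemma hasDerivAt_Iic_integral (f : ℝ → ℝ) (hf : Continuous f)
    (hint : ∀ a : ℝ, MeasureTheory.IntegrableOn f (Set.Iic a)) (x : ℝ) :
    HasDerivAt (fun y => ∫ t in Set.Iic y, f t) (f x) x := by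
  have h1 : HasDerivAt (fun y => (∫ t in Set.Iic x, f t) + ∫ t in x..y, f t) (f x) x :=
    (intervalIntegral.integral_hasDerivAt_right (hf.intervalIntegrable x x)
      hf.aestronglyMeasurable.stronglyMeasurableAtFilter hf.continuousAt).const_add _
  refine h1.congr_of_eventuallyEq (Filter.Eventually.of_forall fun y => ?_)
  show (∫ t in Set.Iic y, f t) = (∫ t in Set.Iic x, f t) + ∫ t in x..y, f t
  rw [← intervalIntegral.integral_Iic_sub_Iic (hint x) (hint y)]
  ring

private lemma hasDerivAt_Ici_integral (g : ℝ → ℝ) (hg : Continuous g)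
    (hint : ∀ a : ℝ, MeasureTheory.IntegrableOn (fun t => g (-t)) (Set.Iic a)) (x : ℝ) :
    HasDerivAt (fun y => ∫ t in Set.Ici y, g t) (-(g x)) x := by
  have h1 := (hasDerivAt_Iic_integral (fun t => g (-t)) (hg.comp continuous_neg) hint (-x)).comp
    x (hasDerivAt_neg x)
  have h2 : HasDerivAt ((fun z => ∫ t in Set.Iic z, g (-t)) ∘ (fun y : ℝ => -y)) (-(g x)) x := by
    simpa using h1
  refine h2.congr_of_eventuallyEq (Filter.Eventually.of_forall fun y => ?_)
  show (∫ t in Set.Ici y, g t) = ∫ t in Set.Iic (-y), g (-t)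
  rw [integral_comp_neg_Iic, neg_neg, MeasureTheory.integral_Ici_eq_integral_Ioi]

/-- Pointwise core of Theorem 1.2: if `m` is continuous, bounded and integrable,
nonpositive on `(-∞, x₀]` and nonnegative on `[x₀, ∞)`, and `u = G ∗ m` with
`G(x) = (1/2)e^{-|x|}`, then `u'(x) ≥ -sup_y |u(y)|` for every `x`. -/
theorem lower_bound_ux
    (m : ℝ → ℝ) (hm_cont : Continuous m)
    (C : ℝ) (hm_bdd : ∀ x : ℝ, |m x| ≤ C)
    (hm_int : MeasureTheory.Integrable m)
    (x₀ : ℝ) (hneg : ∀ x : ℝ, x ≤ x₀ → m x ≤ 0) (hpos : ∀ x : ℝ, x₀ ≤ x → 0 ≤ m x)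
    (u : ℝ → ℝ)
    (hu : ∀ x : ℝ, u x = (1/2) * ∫ ξ : ℝ, Real.exp (-|x - ξ|) * m ξ) :
    ∀ x : ℝ, -(⨆ y : ℝ, |u y|) ≤ deriv u x := by
  intro x
  set f : ℝ → ℝ := fun ξ => Real.exp ξ * m ξ with hfdef
  set g : ℝ → ℝ := fun ξ => Real.exp (-ξ) * m ξ with hgdef
  set A : ℝ → ℝ := fun a => ∫ ξ in Set.Iic a, f ξ with hAdef
  set B : ℝ → ℝ := fun a => ∫ ξ in Set.Ici a, g ξ with hBdef
  have hfc : Continuous f := Real.continuous_exp.mul hm_cont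
  have hgc : Continuous g := (Real.continuous_exp.comp continuous_neg).mul hm_cont
  -- integrability of f on Iic a
  have hfint : ∀ a : ℝ, MeasureTheory.IntegrableOn f (Set.Iic a) := by
    intro a
    refine MeasureTheory.Integrable.mono' ((hm_int.abs.const_mul (Real.exp a)).restrict)
      hfc.aestronglyMeasurable.restrict ?_
    rw [MeasureTheory.ae_restrict_iff' measurableSet_Iic]
    refine Filter.Eventually.of_forall fun ξ hξ => ?_
    simp only [hfdef, Real.norm_eq_abs, abs_mul, abs_of_pos (Real.exp_pos ξ)]
    exact mul_le_mul_of_nonneg_right (Real.exp_le_exp.mpr hξ) (abs_nonneg _)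
  -- integrability of g ∘ neg on Iic a
  have hgint : ∀ a : ℝ, MeasureTheory.IntegrableOn (fun t => g (-t)) (Set.Iic a) := by
    intro a
    refine MeasureTheory.Integrable.mono'
      (((hm_int.comp_neg).abs.const_mul (Real.exp a)).restrict)
      ((hgc.comp continuous_neg).aestronglyMeasurable.restrict) ?_
    rw [MeasureTheory.ae_restrict_iff' measurableSet_Iic]
    refine Filter.Eventually.of_forall fun ξ hξ => ?_
    simp only [hgdef, Real.norm_eq_abs, neg_neg, abs_mul, abs_of_pos (Real.exp_pos ξ)]
    exact mul_le_mul_of_nonneg_right (Real.exp_le_exp.mpr hξ) (abs_nonneg _)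
  have hgintIci : ∀ a : ℝ, MeasureTheory.IntegrableOn g (Set.Ici a) := by
    intro a
    refine MeasureTheory.Integrable.mono' ((hm_int.abs.const_mul (Real.exp (-a))).restrict)
      hgc.aestronglyMeasurable.restrict ?_
    rw [MeasureTheory.ae_restrict_iff' measurableSet_Ici]
    refine Filter.Eventually.of_forall fun ξ hξ => ?_
    simp only [hgdef, Real.norm_eq_abs, abs_mul, abs_of_pos (Real.exp_pos (-ξ))]
    exact mul_le_mul_of_nonneg_right (Real.exp_le_exp.mpr (neg_le_neg hξ)) (abs_nonneg _)
  -- derivatives of A and B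
  have hAder : HasDerivAt A (f x) x := hasDerivAt_Iic_integral f hfc hfint x
  have hBder : HasDerivAt B (-(g x)) x := hasDerivAt_Ici_integral g hgc hgint x
  -- the kernel integrand is integrable
  have hint_abs : ∀ y : ℝ, MeasureTheory.Integrable (fun ξ => Real.exp (-|y - ξ|) * m ξ) := by
    intro y
    refine hm_int.abs.mono' ?_ (Filter.Eventually.of_forall fun ξ => ?_)
    · exact ((Real.continuous_exp.comp
        ((continuous_abs.comp (continuous_const.sub continuous_id)).neg)).mul
        hm_cont).aestronglyMeasurable
    · rw [Real.norm_eq_abs, abs_mul, abs_of_pos (Real.exp_pos _)]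
      exact mul_le_of_le_one_left (abs_nonneg _)
        (Real.exp_le_one_iff.mpr (neg_nonpos.mpr (abs_nonneg _)))
  -- representation of u
  have hurep : ∀ y : ℝ, u y = (1/2) * (Real.exp (-y) * A y + Real.exp y * B y) := by
    intro y
    have hsplit := intervalIntegral.integral_Iic_add_Ioi (b := y)
      ((hint_abs y).integrableOn) ((hint_abs y).integrableOn)
    have hleft : (∫ ξ in Set.Iic y, Real.exp (-|y - ξ|) * m ξ) = Real.exp (-y) * A y := by
      have h1 : (∫ ξ in Set.Iic y, Real.exp (-|y - ξ|) * m ξ)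
          = ∫ ξ in Set.Iic y, Real.exp (-y) * (Real.exp ξ * m ξ) := by
        refine MeasureTheory.setIntegral_congr_fun measurableSet_Iic fun ξ hξ => ?_
        rw [abs_of_nonneg (sub_nonneg.mpr hξ), show (-(y - ξ)) = -y + ξ by ring,
          Real.exp_add, mul_assoc]
      rw [h1, MeasureTheory.integral_const_mul]
    have hright : (∫ ξ in Set.Ioi y, Real.exp (-|y - ξ|) * m ξ) = Real.exp y * B y := by
      have h1 : (∫ ξ in Set.Ioi y, Real.exp (-|y - ξ|) * m ξ)
          = ∫ ξ in Set.Ioi y, Real.exp y * (Real.exp (-ξ) * m ξ) := by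
        refine MeasureTheory.setIntegral_congr_fun measurableSet_Ioi fun ξ hξ => ?_
        rw [abs_of_nonpos (sub_nonpos.mpr (le_of_lt hξ)), show (- -(y - ξ)) = y + -ξ by ring,
          Real.exp_add, mul_assoc]
      rw [h1, MeasureTheory.integral_const_mul, hBdef]
      simp only [MeasureTheory.integral_Ici_eq_integral_Ioi]
      rfl
    rw [hu y, ← hsplit, hleft, hright]
  -- derivative of u
  have hU : HasDerivAt u ((1/2) * (Real.exp x * B x - Real.exp (-x) * A x)) x := by
    have h1 : HasDerivAt (fun y : ℝ => Real.exp (-y)) (-Real.exp (-x)) x := by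
      simpa [Function.comp_def] using (Real.hasDerivAt_exp (-x)).comp x (hasDerivAt_neg x)
    have h2 := h1.mul hAder
    have h3 := (Real.hasDerivAt_exp x).mul hBder
    have h4 := (h2.add h3).const_mul (1/2 : ℝ)
    have h5 : HasDerivAt u ((1/2) * (-Real.exp (-x) * A x + Real.exp (-x) * f x +
        (Real.exp x * B x + Real.exp x * -(g x)))) x :=
      h4.congr_of_eventuallyEq (Filter.Eventually.of_forall fun y => hurep y)
    have e1 : Real.exp (-x) * f x = m x := by
      simp only [hfdef, ← mul_assoc, ← Real.exp_add, neg_add_cancel, Real.exp_zero, one_mul]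
    have e2 : Real.exp x * g x = m x := by
      simp only [hgdef, ← mul_assoc, ← Real.exp_add, add_neg_cancel, Real.exp_zero, one_mul]
    have : (1/2 : ℝ) * (Real.exp x * B x - Real.exp (-x) * A x)
        = (1/2) * (-Real.exp (-x) * A x + Real.exp (-x) * f x +
          (Real.exp x * B x + Real.exp x * -(g x))) := by
      rw [e1, mul_neg, e2]; ring
    rw [this]
    exact h5
  have hd : deriv u x = (1/2) * (Real.exp x * B x - Real.exp (-x) * A x) := hU.deriv
  -- the supremum is attained above |u x|
  have hbdd : BddAbove (Set.range fun y => |u y|) := by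
    refine ⟨(1/2) * ∫ ξ : ℝ, |m ξ|, ?_⟩
    rintro _ ⟨y, rfl⟩
    show |u y| ≤ _
    rw [hu y, abs_mul, abs_of_pos (by norm_num : (0:ℝ) < 1/2)]
    refine mul_le_mul_of_nonneg_left ?_ (by norm_num)
    have hb : ∀ ξ : ℝ, ‖Real.exp (-|y - ξ|) * m ξ‖ ≤ |m ξ| := fun ξ => by
      rw [Real.norm_eq_abs, abs_mul, abs_of_pos (Real.exp_pos _)]
      exact mul_le_of_le_one_left (abs_nonneg _)
        (Real.exp_le_one_iff.mpr (neg_nonpos.mpr (abs_nonneg _)))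
    have h := MeasureTheory.norm_integral_le_of_norm_le hm_int.abs
      (Filter.Eventually.of_forall hb)
    simpa using h
  have hsup : ∀ y : ℝ, |u y| ≤ ⨆ z : ℝ, |u z| := fun y => le_ciSup hbdd y
  rcases le_total x₀ x with hx | hx
  · -- x ≥ x₀ : B x ≥ 0
    have hB0 : 0 ≤ B x := by
      refine MeasureTheory.setIntegral_nonneg measurableSet_Ici fun ξ hξ => ?_
      exact mul_nonneg (Real.exp_pos _).le (hpos ξ (hx.trans hξ))
    have h1 : deriv u x + u x = Real.exp x * B x := by rw [hd, hurep x]; ring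
    have h2 : 0 ≤ Real.exp x * B x := mul_nonneg (Real.exp_pos x).le hB0
    have h3 : u x ≤ ⨆ z : ℝ, |u z| := (le_abs_self _).trans (hsup x)
    linarith
  · -- x ≤ x₀ : A x ≤ 0
    have hA0 : A x ≤ 0 := by
      refine MeasureTheory.setIntegral_nonpos measurableSet_Iic fun ξ hξ => ?_
      exact mul_nonpos_iff.mpr (Or.inl ⟨(Real.exp_pos _).le, hneg ξ (le_trans hξ hx)⟩)
    have h1 : deriv u x - u x = Real.exp (-x) * (-A x) := by rw [hd, hurep x]; ring
    have h2 : 0 ≤ Real.exp (-x) * (-A x) :=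
      mul_nonneg (Real.exp_pos (-x)).le (neg_nonneg.mpr hA0)
    have h3 : -(⨆ z : ℝ, |u z|) ≤ u x := by
      have := hsup x
      have := neg_abs_le (u x)
      linarith
    linarith
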